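/- If u is a nonzero finite trigonometric polynomial u = Σ_{n∈N} u_n with all ‖u_n‖ equal and at least two distinct harmonics, then the vectors u and Σ_n n·u_n are linearly independent; consequently the scattered reactive current i_sr = Σ_{n∈N}(⟨u̇_n,i⟩/‖u̇_n‖² − ⟨u̇,i⟩/‖u̇‖²)u̇_n can be nonzero even when the Iliovici current i_I = (⟨u̇,i⟩/‖u̇‖²)u̇ is zero: exhibit i with ⟨u̇,i⟩ = 0 but i_sr ≠ 0. -/

import Mathlib

open MeasureTheory intervalIntegral

lemma cosint (T ω : ℝ) (hT : 0 < T) (hω : ω = 2 * Real.pi / T) (k : ℤ) (hk : k ≠ 0) :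
    ∫ t in (0:ℝ)..T, Real.cos ((k : ℝ) * ω * t) = 0 := by
  have hc : (k : ℝ) * ω ≠ 0 := by
    apply mul_ne_zero (Int.cast_ne_zero.mpr hk)
    rw [hω]; positivity
  have h1 : ∫ t in (0:ℝ)..T, Real.cos ((k : ℝ) * ω * t)
      = ((k : ℝ) * ω)⁻¹ • ∫ x in ((k:ℝ)*ω*0)..((k:ℝ)*ω*T), Real.cos x := by
    rw [← intervalIntegral.integral_comp_mul_left (fun x => Real.cos x) hc]
  rw [h1, integral_cos]
  have : (k : ℝ) * ω * T = (2 * k : ℤ) * Real.pi := by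
    rw [hω]; push_cast; field_simp
  rw [mul_zero, this, Real.sin_int_mul_pi, Real.sin_zero]
  simp

lemma cosintI (T ω : ℝ) (c : ℝ) : IntervalIntegrable (fun t => Real.cos (c * t)) volume 0 T :=
  (Real.continuous_cos.comp (continuous_const.mul continuous_id)).intervalIntegrable _ _

lemma ICC (T ω : ℝ) (hT : 0 < T) (hω : ω = 2 * Real.pi / T) (n m : ℕ)
    (hn : 0 < n) (hm : 0 < m) :
    ∫ t in (0:ℝ)..T, Real.cos ((n:ℝ)*ω*t) * Real.cos ((m:ℝ)*ω*t)
      = if n = m then T/2 else 0 := by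
  have hpt : ∀ t : ℝ, Real.cos ((n:ℝ)*ω*t) * Real.cos ((m:ℝ)*ω*t)
      = (Real.cos ((((n:ℤ)-(m:ℤ) : ℤ):ℝ)*ω*t) + Real.cos ((((n:ℤ)+(m:ℤ) : ℤ):ℝ)*ω*t))/2 := by
    intro t
    have h1 : (((n:ℤ)-(m:ℤ) : ℤ):ℝ)*ω*t = (n:ℝ)*ω*t - (m:ℝ)*ω*t := by push_cast; ring
    have h2 : (((n:ℤ)+(m:ℤ) : ℤ):ℝ)*ω*t = (n:ℝ)*ω*t + (m:ℝ)*ω*t := by push_cast; ring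
    rw [h1, h2, Real.cos_sub, Real.cos_add]; ring
  simp only [hpt]
  have hInt1 : IntervalIntegrable (fun t => Real.cos ((((n:ℤ)-(m:ℤ) : ℤ):ℝ)*ω*t)) volume 0 T := by
    have := cosintI T ω ((((n:ℤ)-(m:ℤ) : ℤ):ℝ)*ω); simpa [mul_assoc] using this
  have hInt2 : IntervalIntegrable (fun t => Real.cos ((((n:ℤ)+(m:ℤ) : ℤ):ℝ)*ω*t)) volume 0 T := by
    have := cosintI T ω ((((n:ℤ)+(m:ℤ) : ℤ):ℝ)*ω); simpa [mul_assoc] using this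
  rw [intervalIntegral.integral_div, intervalIntegral.integral_add hInt1 hInt2]
  have hI2 : ∫ t in (0:ℝ)..T, Real.cos ((((n:ℤ)+(m:ℤ) : ℤ):ℝ)*ω*t) = 0 :=
    cosint T ω hT hω _ (by omega)
  by_cases h : n = m
  · subst h
    have : ∀ t : ℝ, Real.cos ((((n:ℤ)-(n:ℤ) : ℤ):ℝ)*ω*t) = 1 := by
      intro t; norm_num
    simp only [this]
    rw [hI2, intervalIntegral.integral_const]
    simp
  · have hI1 : ∫ t in (0:ℝ)..T, Real.cos ((((n:ℤ)-(m:ℤ) : ℤ):ℝ)*ω*t) = 0 :=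
      cosint T ω hT hω _ (by omega)
    rw [hI1, hI2]
    simp [h]

lemma ISS (T ω : ℝ) (hT : 0 < T) (hω : ω = 2 * Real.pi / T) (n m : ℕ)
    (hn : 0 < n) (hm : 0 < m) :
    ∫ t in (0:ℝ)..T, Real.sin ((n:ℝ)*ω*t) * Real.sin ((m:ℝ)*ω*t)
      = if n = m then T/2 else 0 := by
  have hpt : ∀ t : ℝ, Real.sin ((n:ℝ)*ω*t) * Real.sin ((m:ℝ)*ω*t)
      = (Real.cos ((((n:ℤ)-(m:ℤ) : ℤ):ℝ)*ω*t) - Real.cos ((((n:ℤ)+(m:ℤ) : ℤ):ℝ)*ω*t))/2 := by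
    intro t
    have h1 : (((n:ℤ)-(m:ℤ) : ℤ):ℝ)*ω*t = (n:ℝ)*ω*t - (m:ℝ)*ω*t := by push_cast; ring
    have h2 : (((n:ℤ)+(m:ℤ) : ℤ):ℝ)*ω*t = (n:ℝ)*ω*t + (m:ℝ)*ω*t := by push_cast; ring
    rw [h1, h2, Real.cos_sub, Real.cos_add]; ring
  simp only [hpt]
  have hInt1 : IntervalIntegrable (fun t => Real.cos ((((n:ℤ)-(m:ℤ) : ℤ):ℝ)*ω*t)) volume 0 T := by
    have := cosintI T ω ((((n:ℤ)-(m:ℤ) : ℤ):ℝ)*ω); simpa [mul_assoc] using this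
  have hInt2 : IntervalIntegrable (fun t => Real.cos ((((n:ℤ)+(m:ℤ) : ℤ):ℝ)*ω*t)) volume 0 T := by
    have := cosintI T ω ((((n:ℤ)+(m:ℤ) : ℤ):ℝ)*ω); simpa [mul_assoc] using this
  rw [intervalIntegral.integral_div, intervalIntegral.integral_sub hInt1 hInt2]
  have hI2 : ∫ t in (0:ℝ)..T, Real.cos ((((n:ℤ)+(m:ℤ) : ℤ):ℝ)*ω*t) = 0 :=
    cosint T ω hT hω _ (by omega)
  by_cases h : n = m
  · subst h
    have : ∀ t : ℝ, Real.cos ((((n:ℤ)-(n:ℤ) : ℤ):ℝ)*ω*t) = 1 := by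
      intro t; norm_num
    simp only [this]
    rw [hI2, intervalIntegral.integral_const]
    simp
  · have hI1 : ∫ t in (0:ℝ)..T, Real.cos ((((n:ℤ)-(m:ℤ) : ℤ):ℝ)*ω*t) = 0 :=
      cosint T ω hT hω _ (by omega)
    rw [hI1, hI2]
    simp [h]

lemma ICC' (T ω : ℝ) (hT : 0 < T) (hω : ω = 2 * Real.pi / T) (n m : ℕ)
    (hn : 0 < n) (hm : 0 < m) (A : ℝ) :
    ∫ t in (0:ℝ)..T, A * Real.cos ((n:ℝ)*ω*t) * Real.cos ((m:ℝ)*ω*t)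
      = A * (if n = m then T/2 else 0) := by
  rw [show (fun t => A * Real.cos ((n:ℝ)*ω*t) * Real.cos ((m:ℝ)*ω*t))
      = fun t => A * (Real.cos ((n:ℝ)*ω*t) * Real.cos ((m:ℝ)*ω*t)) from
    funext fun t => mul_assoc _ _ _]
  rw [intervalIntegral.integral_const_mul, ICC T ω hT hω n m hn hm]

lemma ISS' (T ω : ℝ) (hT : 0 < T) (hω : ω = 2 * Real.pi / T) (n m : ℕ)
    (hn : 0 < n) (hm : 0 < m) (A B : ℝ) :
    ∫ t in (0:ℝ)..T, (A * Real.sin ((n:ℝ)*ω*t)) * (B * Real.sin ((m:ℝ)*ω*t))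
      = A * B * (if n = m then T/2 else 0) := by
  rw [show (fun t => (A * Real.sin ((n:ℝ)*ω*t)) * (B * Real.sin ((m:ℝ)*ω*t)))
      = fun t => (A * B) * (Real.sin ((n:ℝ)*ω*t) * Real.sin ((m:ℝ)*ω*t)) from
    funext fun t => by ring]
  rw [intervalIntegral.integral_const_mul, ISS T ω hT hω n m hn hm]

/-- mean inner product over one period. -/
noncomputable def ip (T : ℝ) (f g : ℝ → ℝ) : ℝ :=
  (1/T) * ∫ t in (0:ℝ)..T, f t * g t

theorem scattered_reactive_nonzero (T : ℝ) (hT : 0 < T) (ω : ℝ)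
    (hω : ω = 2 * Real.pi / T)
    (N : Finset ℕ) (hcard : 2 ≤ N.card) (hN : ∀ n ∈ N, 0 < n)
    (U : ℝ) (hU : 0 < U)
    (un dun : ℕ → ℝ → ℝ) (u du : ℝ → ℝ)
    (hun : ∀ n ∈ N, ∀ t, un n t = Real.sqrt 2 * U * Real.cos (n * ω * t))
    (hdun : ∀ n ∈ N, ∀ t, HasDerivAt (un n) (dun n t) t)
    (hu : ∀ t, u t = ∑ n ∈ N, un n t)
    (hdu : ∀ t, du t = ∑ n ∈ N, dun n t) :
    (∀ a b : ℝ, (∀ t, a * u t + b * (∑ n ∈ N, (n : ℝ) * un n t) = 0) →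
      a = 0 ∧ b = 0) ∧
    ∃ i : ℝ → ℝ, ip T du i = 0 ∧
      ¬ (∀ t, (∑ n ∈ N,
          (ip T (dun n) i / ip T (dun n) (dun n) - ip T du i / ip T du du)
            * dun n t) = 0) := by
  have hω0 : 0 < ω := by rw [hω]; positivity
  -- two distinct elements
  obtain ⟨m', hm'N, k', hk'N, hne⟩ := Finset.one_lt_card.mp (by omega : 1 < N.card)
  obtain ⟨m, k, hmN, hkN, hmk⟩ : ∃ m k, m ∈ N ∧ k ∈ N ∧ m < k := by
    rcases hne.lt_or_gt with h | h
    · exact ⟨m', k', hm'N, hk'N, h⟩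
    · exact ⟨k', m', hk'N, hm'N, h⟩
  constructor
  · -- linear independence
    intro a b hab
    have hsum : ∀ t : ℝ,
        (∑ n ∈ N, ((a + b*(n:ℝ)) * (Real.sqrt 2 * U)) * Real.cos ((n:ℝ)*ω*t)) = 0 := by
      intro t
      have h := hab t
      rw [hu t, Finset.mul_sum, Finset.mul_sum, ← Finset.sum_add_distrib] at h
      rw [← h]
      refine Finset.sum_congr rfl fun n hn => ?_
      rw [hun n hn t]; ring
    have hc : ∀ p ∈ N, a + b*(p:ℝ) = 0 := by
      intro p hp
      have h2 : (∑ n ∈ N, ((a + b*(n:ℝ)) * (Real.sqrt 2 * U)) * (if n = p then T/2 else 0)) = 0 := by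
        calc ∑ n ∈ N, ((a + b*(n:ℝ)) * (Real.sqrt 2 * U)) * (if n = p then T/2 else 0)
            = ∑ n ∈ N, ∫ t in (0:ℝ)..T,
                ((a + b*(n:ℝ)) * (Real.sqrt 2 * U)) * Real.cos ((n:ℝ)*ω*t) * Real.cos ((p:ℝ)*ω*t) :=
              Finset.sum_congr rfl fun n hn =>
                (ICC' T ω hT hω n p (hN n hn) (hN p hp) _).symm
          _ = ∫ t in (0:ℝ)..T, ∑ n ∈ N,
                ((a + b*(n:ℝ)) * (Real.sqrt 2 * U)) * Real.cos ((n:ℝ)*ω*t) * Real.cos ((p:ℝ)*ω*t) := by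
              rw [intervalIntegral.integral_finset_sum]
              intro n _
              apply Continuous.intervalIntegrable
              fun_prop
          _ = ∫ t in (0:ℝ)..T, (0:ℝ) := by
              congr 1
              funext t
              rw [← Finset.sum_mul, hsum t, zero_mul]
          _ = 0 := by simp
      rw [Finset.sum_eq_single p (fun n _ hnp => by simp [hnp]) (fun h => absurd hp h)] at h2
      norm_num at h2
      rcases h2 with (h2 | h2) | h2
      · exact h2
      · exact absurd h2 (ne_of_gt hU)
      · exact absurd h2 (ne_of_gt hT)
    have e1 := hc m hmN
    have e2 := hc k hkN
    have hmkr : (m:ℝ) < (k:ℝ) := Nat.cast_lt.mpr hmk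
    have hb : b = 0 := by
      have h6 : b * ((m:ℝ) - (k:ℝ)) = 0 := by linarith
      rcases mul_eq_zero.mp h6 with h | h
      · exact h
      · exact absurd h (by intro hh; nlinarith)
    constructor
    · rw [hb] at e1; simpa using e1
    · exact hb
  · -- the scattered reactive current
    set C : ℕ → ℝ := fun n => Real.sqrt 2 * U * ((n:ℝ) * ω) with hC
    have hCpos : ∀ n ∈ N, 0 < C n := by
      intro n hn
      have : (0:ℕ) < n := hN n hn
      simp only [hC]
      have : (0:ℝ) < (n:ℝ) := by exact_mod_cast this
      positivity
    have hds : ∀ n ∈ N, ∀ t, dun n t = -C n * Real.sin ((n:ℝ)*ω*t) := by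
      intro n hn t
      have hunf : un n = fun t => Real.sqrt 2 * U * Real.cos ((n:ℝ) * ω * t) :=
        funext (hun n hn)
      have hder : HasDerivAt (fun t => Real.sqrt 2 * U * Real.cos ((n:ℝ) * ω * t))
          (Real.sqrt 2 * U * (-Real.sin ((n:ℝ) * ω * t) * ((n:ℝ) * ω * 1))) t := by
        exact (((Real.hasDerivAt_cos ((n:ℝ)*ω*t)).comp t
          ((hasDerivAt_id t).const_mul ((n:ℝ)*ω))).const_mul (Real.sqrt 2 * U))
      have h := hdun n hn t
      rw [hunf] at h
      have := h.unique hder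
      rw [this, hC]; ring
    have hint : ∀ n ∈ N, ∀ p ∈ N,
        IntervalIntegrable (fun t => dun n t * dun p t) volume 0 T := by
      intro n hn p hp
      simp only [hds n hn, hds p hp]
      apply Continuous.intervalIntegrable
      fun_prop
    have hprod : ∀ n ∈ N, ∀ p ∈ N,
        ∫ t in (0:ℝ)..T, dun n t * dun p t = (C n * C p) * (if n = p then T/2 else 0) := by
      intro n hn p hp
      simp only [hds n hn, hds p hp]
      rw [ISS' T ω hT hω n p (hN n hn) (hN p hp) (-C n) (-C p)]
      ring_nf
    have hipnn : ∀ n ∈ N, ip T (dun n) (dun n) = (C n)^2/2 := by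
      intro n hn
      unfold ip
      rw [hprod n hn n hn]
      simp only [if_pos rfl, ↓reduceIte]
      field_simp
    set I : ℝ → ℝ := fun t => 2/(C m)^2 * dun m t - 2/(C k)^2 * dun k t with hI
    have hterm : ∀ n ∈ N,
        ∫ t in (0:ℝ)..T, (2/(C m)^2 * (dun n t * dun m t) - 2/(C k)^2 * (dun n t * dun k t))
          = (if n = m then T else 0) - (if n = k then T else 0) := by
      intro n hn
      rw [intervalIntegral.integral_sub ((hint n hn m hmN).const_mul _)
        ((hint n hn k hkN).const_mul _), intervalIntegral.integral_const_mul,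
        intervalIntegral.integral_const_mul, hprod n hn m hmN, hprod n hn k hkN]
      have hcm := hCpos m hmN
      have hck := hCpos k hkN
      have hcm' : C m ≠ 0 := ne_of_gt hcm
      have hck' : C k ≠ 0 := ne_of_gt hck
      rcases eq_or_ne n m with rfl | h1
      · simp only [if_pos rfl, if_neg hmk.ne, ↓reduceIte]
        field_simp
        ring
      · rcases eq_or_ne n k with rfl | h2
        · simp only [if_neg h1, if_pos rfl, ↓reduceIte]
          field_simp
          ring
        · simp only [if_neg h1, if_neg h2]
          ring
    have hipnI : ∀ n ∈ N, ip T (dun n) I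
        = (if n = m then (1:ℝ) else 0) - (if n = k then 1 else 0) := by
      intro n hn
      unfold ip
      simp only [hI]
      simp only [show ∀ t, dun n t * (2/(C m)^2 * dun m t - 2/(C k)^2 * dun k t)
          = 2/(C m)^2 * (dun n t * dun m t) - 2/(C k)^2 * (dun n t * dun k t) from
        fun t => by ring]
      rw [hterm n hn]
      have hT' : T ≠ 0 := ne_of_gt hT
      split_ifs <;> field_simp <;> ring
    have hipduI : ip T du I = 0 := by
      unfold ip
      simp only [hI]
      have hptr : ∀ t, du t * (2/(C m)^2 * dun m t - 2/(C k)^2 * dun k t)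
          = ∑ n ∈ N, (2/(C m)^2 * (dun n t * dun m t) - 2/(C k)^2 * (dun n t * dun k t)) := by
        intro t
        rw [hdu t, Finset.sum_mul]
        exact Finset.sum_congr rfl fun n _ => by ring
      simp only [hptr]
      rw [intervalIntegral.integral_finset_sum
        (fun n hn => ((hint n hn m hmN).const_mul _).sub ((hint n hn k hkN).const_mul _))]
      rw [Finset.sum_congr rfl (fun n hn => hterm n hn), Finset.sum_sub_distrib,
        Finset.sum_ite_eq' N m (fun _ => T), Finset.sum_ite_eq' N k (fun _ => T)]
      simp [hmN, hkN]
    refine ⟨I, hipduI, ?_⟩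
    intro h
    set t0 : ℝ := T/(4*(m:ℝ)) with ht0
    have hm0 : (0:ℝ) < (m:ℝ) := by exact_mod_cast hN m hmN
    have hmt0 : (m:ℝ)*ω*t0 = Real.pi/2 := by
      rw [ht0, hω]
      field_simp
      ring
    have h0 := h t0
    have hsub : ({m, k} : Finset ℕ) ⊆ N := by
      intro x hx
      simp only [Finset.mem_insert, Finset.mem_singleton] at hx
      rcases hx with rfl | rfl
      · exact hmN
      · exact hkN
    have hzero0 : ∀ n ∈ N, n ∉ ({m, k} : Finset ℕ) →
        (ip T (dun n) I / ip T (dun n) (dun n) - ip T du I / ip T du du) * dun n t0 = 0 := by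
      intro n hn hnot
      simp only [Finset.mem_insert, Finset.mem_singleton, not_or] at hnot
      rw [hipnI n hn, hipduI]
      simp [hnot.1, hnot.2]
    rw [← Finset.sum_subset hsub hzero0] at h0
    rw [Finset.sum_pair hmk.ne] at h0
    rw [hipnI m hmN, hipnI k hkN, hipnn m hmN, hipnn k hkN, hipduI,
      hds m hmN t0, hds k hkN t0, hmt0, Real.sin_pi_div_two] at h0
    simp only [if_pos rfl, if_neg hmk.ne, if_neg hmk.ne', zero_div, sub_zero, ↓reduceIte] at h0
    have hcm := hCpos m hmN
    have hck := hCpos k hkN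
    have hCmk : C m < C k := by
      simp only [hC]
      have hmklt : (m:ℝ) < (k:ℝ) := Nat.cast_lt.mpr hmk
      exact mul_lt_mul_of_pos_left (mul_lt_mul_of_pos_right hmklt hω0) (by positivity)
    have hS : Real.sin ((k:ℝ)*ω*t0) ≤ 1 := Real.sin_le_one _
    have hcm' : C m ≠ 0 := ne_of_gt hcm
    have hck' : C k ≠ 0 := ne_of_gt hck
    field_simp at h0
    nlinarith [h0, mul_nonneg (mul_nonneg (sub_nonneg.mpr hS) (sq_nonneg (C m))) hck.le,
      mul_pos (mul_pos (sub_pos.mpr hCmk) hcm) hck]
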